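/- Every 2×2 matrix over a finite field F_q can be written as the sum of two matrices of determinant 1; that is, SL₂(F_q) + SL₂(F_q) = M₂(F_q). -/

import Mathlib

theorem sl2_add_sl2_eq_m2 {F : Type*} [Field F] [Fintype F]
    (M : Matrix (Fin 2) (Fin 2) F) :
    ∃ A B : Matrix (Fin 2) (Fin 2) F, A.det = 1 ∧ B.det = 1 ∧ M = A + B := by
  by_cases hd : M 1 1 ≠ 0
  · set A : Matrix (Fin 2) (Fin 2) F :=
      !![M 0 0 - (1 + (M 0 1 + 1) * (M 1 0 - 1)) / M 1 1, -1; 1, 0] with hA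
    refine ⟨A, M - A, ?_, ?_, by abel⟩
    · simp [hA, Matrix.det_fin_two_of]
    · rw [Matrix.det_fin_two]
      simp [hA, Matrix.sub_apply]
      field_simp
      ring
  push_neg at hd
  by_cases ha : M 0 0 ≠ 0
  · set A : Matrix (Fin 2) (Fin 2) F :=
      !![0, -1; 1, M 1 1 - (1 + (M 0 1 + 1) * (M 1 0 - 1)) / M 0 0] with hA
    refine ⟨A, M - A, ?_, ?_, by abel⟩
    · simp [hA, Matrix.det_fin_two_of]
    · rw [Matrix.det_fin_two]
      simp [hA, Matrix.sub_apply]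
      field_simp
      ring
  push_neg at ha
  by_cases hc : M 1 0 ≠ 0
  · set A : Matrix (Fin 2) (Fin 2) F :=
      !![-1, M 0 1 - ((M 0 0 + 1) * (M 1 1 + 1) - 1) / M 1 0; 0, -1] with hA
    refine ⟨A, M - A, ?_, ?_, by abel⟩
    · simp [hA, Matrix.det_fin_two_of]
    · rw [Matrix.det_fin_two]
      simp [hA, Matrix.sub_apply]
      field_simp
      ring
  push_neg at hc
  by_cases hb : M 0 1 ≠ 0
  · set A : Matrix (Fin 2) (Fin 2) F :=
      !![-1, 0; M 1 0 - ((M 0 0 + 1) * (M 1 1 + 1) - 1) / M 0 1, -1] with hA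
    refine ⟨A, M - A, ?_, ?_, by abel⟩
    · simp [hA, Matrix.det_fin_two_of]
    · rw [Matrix.det_fin_two]
      simp [hA, Matrix.sub_apply]
      field_simp
      ring
  push_neg at hb
  refine ⟨!![0, -1; 1, 0], !![0, 1; -1, 0], ?_, ?_, ?_⟩
  · simp [Matrix.det_fin_two_of]
  · simp [Matrix.det_fin_two_of]
  · ext i j
    fin_cases i <;> fin_cases j <;> simp [ha, hb, hc, hd]
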